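/- For every integer N ≥ 1, the coefficient of y^{N−1} in the formal power series ((1−y)^N)·((1−2y−y²)⁻¹)^N over ℚ equals Σ_{ℓ≥0} 2^ℓ · binom(N−1+ℓ, ℓ) · binom(2N−2, N−1−2ℓ), where the second binomial coefficient is taken to be 0 whenever N−1−2ℓ < 0, and (1−2y−y²)⁻¹ denotes the multiplicative inverse of 1−2y−y² in ℚ⟦y⟧ (which exists since its constant term is 1). -/

import Mathlib

open PowerSeries Finset

section Aux

variable {R : Type*} [CommRing R]

private lemma pascal_step (x y : R) (n m : ℕ) :
    x * ∑ ℓ ∈ range (m + 1), (Nat.choose (n + 1 + ℓ) ℓ : R) * y ^ ℓ * (x + y) ^ (m - ℓ) =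
      (x + y) * ∑ ℓ ∈ range (m + 1), (Nat.choose (n + ℓ) ℓ : R) * y ^ ℓ * (x + y) ^ (m - ℓ)
        - (Nat.choose (n + m + 1) m : R) * y ^ (m + 1) := by
  set z := x + y with hz
  set A := ∑ ℓ ∈ range (m + 1), (Nat.choose (n + 1 + ℓ) ℓ : R) * y ^ ℓ * z ^ (m - ℓ) with hA
  set B := ∑ ℓ ∈ range (m + 1), (Nat.choose (n + ℓ) ℓ : R) * y ^ ℓ * z ^ (m - ℓ) with hB
  have hxz : x = z - y := by rw [hz]; ring
  -- difference of the two sums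
  have hAB : A - B = ∑ j ∈ range m,
      (Nat.choose (n + j + 1) j : R) * y ^ (j + 1) * z ^ (m - (j + 1)) := by
    rw [hA, hB, ← Finset.sum_sub_distrib, Finset.sum_range_succ']
    have h0 : ((Nat.choose (n + 1 + 0) 0 : R) * y ^ 0 * z ^ (m - 0)
        - (Nat.choose (n + 0) 0 : R) * y ^ 0 * z ^ (m - 0)) = 0 := by simp
    rw [h0, add_zero]
    refine Finset.sum_congr rfl fun j hj => ?_
    have hp : Nat.choose (n + 1 + (j + 1)) (j + 1)
        = Nat.choose (n + j + 1) j + Nat.choose (n + (j + 1)) (j + 1) := by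
      have h := Nat.choose_succ_succ (n + j + 1) j
      have e1 : n + 1 + (j + 1) = (n + j + 1) + 1 := by omega
      have e2 : n + (j + 1) = n + j + 1 := by omega
      rw [e1, e2]
      exact h
    rw [hp]
    push_cast
    ring
  have hyA : y * A = (∑ j ∈ range m, (Nat.choose (n + 1 + j) j : R) * y ^ (j + 1) * z ^ (m - j))
      + (Nat.choose (n + m + 1) m : R) * y ^ (m + 1) := by
    rw [hA, Finset.mul_sum, Finset.sum_range_succ]
    have : n + 1 + m = n + m + 1 := by ring
    rw [this]
    simp only [Nat.sub_self, pow_zero, mul_one]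
    congr 1
    · exact Finset.sum_congr rfl fun j hj => by ring
    · ring
  have hzAB : z * (A - B) = ∑ j ∈ range m,
      (Nat.choose (n + j + 1) j : R) * y ^ (j + 1) * z ^ (m - j) := by
    rw [hAB, Finset.mul_sum]
    refine Finset.sum_congr rfl fun j hj => ?_
    rw [Finset.mem_range] at hj
    have : m - j = (m - (j + 1)) + 1 := by omega
    rw [this, pow_succ]
    ring
  have hsum_eq : ∑ j ∈ range m, (Nat.choose (n + j + 1) j : R) * y ^ (j + 1) * z ^ (m - j)
      = ∑ j ∈ range m, (Nat.choose (n + 1 + j) j : R) * y ^ (j + 1) * z ^ (m - j) := by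
    refine Finset.sum_congr rfl fun j hj => ?_
    have : n + j + 1 = n + 1 + j := by ring
    rw [this]
  have key : x * A = z * B + z * (A - B) - y * A := by rw [hxz]; ring
  rw [key, hzAB, hsum_eq, hyA]
  ring

private lemma key_dvd (x y : R) (n m : ℕ) :
    y ^ (m + 1) ∣ (x + y) ^ (n + m + 1)
      - x ^ (n + 1) * ∑ ℓ ∈ range (m + 1),
          (Nat.choose (n + ℓ) ℓ : R) * y ^ ℓ * (x + y) ^ (m - ℓ) := by
  induction n with
  | zero =>
    have hg := geom_sum₂_mul y (x + y) (m + 1)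
    have hs : (∑ ℓ ∈ range (m + 1), (Nat.choose (0 + ℓ) ℓ : R) * y ^ ℓ * (x + y) ^ (m - ℓ))
        = ∑ i ∈ range (m + 1), y ^ i * (x + y) ^ (m + 1 - 1 - i) := by
      refine Finset.sum_congr rfl fun i hi => by simp [Nat.zero_add, Nat.choose_self]
    have : (x + y) ^ (0 + m + 1) - x ^ (0 + 1) * ∑ ℓ ∈ range (m + 1),
        (Nat.choose (0 + ℓ) ℓ : R) * y ^ ℓ * (x + y) ^ (m - ℓ) = y ^ (m + 1) := by
      rw [hs]
      have hx : x = -(y - (x + y)) := by ring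
      calc (x + y) ^ (0 + m + 1) - x ^ (0 + 1) * ∑ i ∈ range (m + 1), y ^ i * (x + y) ^ (m + 1 - 1 - i)
          = (x + y) ^ (m + 1) + (∑ i ∈ range (m + 1), y ^ i * (x + y) ^ (m + 1 - 1 - i)) * (y - (x + y)) := by
            rw [hx]; ring
        _ = (x + y) ^ (m + 1) + (y ^ (m + 1) - (x + y) ^ (m + 1)) := by rw [hg]
        _ = y ^ (m + 1) := by ring
    rw [this]
  | succ n ih =>
    have hps := pascal_step x y n m
    have h2 : (x + y) ^ (n + 1 + m + 1) - x ^ (n + 1 + 1) * ∑ ℓ ∈ range (m + 1),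
          (Nat.choose (n + 1 + ℓ) ℓ : R) * y ^ ℓ * (x + y) ^ (m - ℓ)
        = (x + y) * ((x + y) ^ (n + m + 1) - x ^ (n + 1) * ∑ ℓ ∈ range (m + 1),
            (Nat.choose (n + ℓ) ℓ : R) * y ^ ℓ * (x + y) ^ (m - ℓ))
          + (Nat.choose (n + m + 1) m : R) * x ^ (n + 1) * y ^ (m + 1) := by
      linear_combination (-(x ^ (n + 1))) * hps
    rw [h2]
    exact dvd_add (Dvd.dvd.mul_left ih _) (Dvd.dvd.mul_left dvd_rfl _)

private lemma pow_mul_inv_pow {k : Type*} [Field k] {f g : PowerSeries k} (h : f * g = 1)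
    {a b : ℕ} (hab : b ≤ a) : f ^ a * g ^ b = f ^ (a - b) := by
  conv_lhs => rw [← Nat.sub_add_cancel hab, pow_add]
  rw [mul_assoc, ← mul_pow, h, one_pow, mul_one]

end Aux

/-- For `N ≥ 1`, the coefficient of `y^(N-1)` in `(1−y)^N · ((1−2y−y²)⁻¹)^N ∈ ℚ⟦y⟧`
equals `∑_{ℓ ≥ 0} 2^ℓ · C(N−1+ℓ, ℓ) · C(2N−2, N−1−2ℓ)` (the terms with `N−1−2ℓ < 0`
vanish, so the sum is taken over `ℓ ≤ (N-1)/2`). -/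
theorem coeff_binomial_sum (N : ℕ) (hN : 1 ≤ N) :
    PowerSeries.coeff (R := ℚ) (N - 1)
        ((1 - PowerSeries.X) ^ N *
          ((1 - 2 * PowerSeries.X - PowerSeries.X ^ 2)⁻¹) ^ N) =
      ∑ ℓ ∈ Finset.range ((N - 1) / 2 + 1),
        (2 : ℚ) ^ ℓ * (Nat.choose (N - 1 + ℓ) ℓ : ℚ) *
          (Nat.choose (2 * N - 2) (N - 1 - 2 * ℓ) : ℚ) := by
  obtain ⟨n, rfl⟩ : ∃ n, N = n + 1 := ⟨N - 1, by omega⟩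
  simp only [Nat.add_sub_cancel]
  set m := n / 2 with hm
  set P : ℚ⟦X⟧ := 1 - 2 * PowerSeries.X - PowerSeries.X ^ 2 with hPdef
  set Q : ℚ⟦X⟧ := 1 - PowerSeries.X with hQdef
  have hPc : constantCoeff P ≠ 0 := by rw [hPdef]; simp
  have hQc : constantCoeff Q ≠ 0 := by rw [hQdef]; simp
  have hP1 : P * P⁻¹ = 1 := PowerSeries.mul_inv_cancel _ hPc
  have hQ1 : Q * Q⁻¹ = 1 := PowerSeries.mul_inv_cancel _ hQc
  have hQ1' : (Q⁻¹ : ℚ⟦X⟧) * Q = 1 := by rw [mul_comm]; exact hQ1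
  -- key divisibility from the auxiliary lemma
  have h1 : P + 2 * PowerSeries.X ^ 2 = Q ^ 2 := by rw [hPdef, hQdef]; ring
  have hdvd := key_dvd P (2 * PowerSeries.X ^ 2) n m
  rw [h1] at hdvd
  have hX : (PowerSeries.X : ℚ⟦X⟧) ^ (2 * (m + 1)) ∣ (2 * PowerSeries.X ^ 2 : ℚ⟦X⟧) ^ (m + 1) :=
    ⟨2 ^ (m + 1), by rw [pow_mul]; ring⟩
  have hdvd2 := (dvd_trans hX hdvd).mul_right ((P⁻¹) ^ (n + 1) * (Q⁻¹) ^ (n + 2 * m + 1))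
  -- simplify the multiplied difference
  have hterm : ∀ ℓ, ℓ ≤ m →
      ((Nat.choose (n + ℓ) ℓ : ℚ⟦X⟧) * (2 * PowerSeries.X ^ 2) ^ ℓ * (Q ^ 2) ^ (m - ℓ)) *
        (P ^ (n + 1) * ((P⁻¹) ^ (n + 1) * (Q⁻¹) ^ (n + 2 * m + 1)))
      = (Nat.choose (n + ℓ) ℓ : ℚ⟦X⟧) * 2 ^ ℓ * (PowerSeries.X ^ (2 * ℓ) *
          (Q⁻¹) ^ (n + 2 * ℓ + 1)) := by
    intro ℓ hℓ
    have hPn : P ^ (n + 1) * (P⁻¹) ^ (n + 1) = 1 := by rw [← mul_pow, hP1, one_pow]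
    have hQcancel : (Q⁻¹ : ℚ⟦X⟧) ^ (n + 2 * m + 1) * Q ^ (2 * (m - ℓ))
        = (Q⁻¹) ^ (n + 2 * ℓ + 1) := by
      rw [pow_mul_inv_pow hQ1' (by omega)]
      congr 1
      omega
    have hy : ((2 : ℚ⟦X⟧) * PowerSeries.X ^ 2) ^ ℓ = 2 ^ ℓ * PowerSeries.X ^ (2 * ℓ) := by
      rw [mul_pow, ← pow_mul]
    have hQ2 : ((Q : ℚ⟦X⟧) ^ 2) ^ (m - ℓ) = Q ^ (2 * (m - ℓ)) := by rw [← pow_mul]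
    calc ((Nat.choose (n + ℓ) ℓ : ℚ⟦X⟧) * (2 * PowerSeries.X ^ 2) ^ ℓ * (Q ^ 2) ^ (m - ℓ)) *
          (P ^ (n + 1) * ((P⁻¹) ^ (n + 1) * (Q⁻¹) ^ (n + 2 * m + 1)))
        = (Nat.choose (n + ℓ) ℓ : ℚ⟦X⟧) * (2 * PowerSeries.X ^ 2) ^ ℓ *
            ((P ^ (n + 1) * (P⁻¹) ^ (n + 1)) *
              ((Q⁻¹) ^ (n + 2 * m + 1) * (Q ^ 2) ^ (m - ℓ))) := by ring
      _ = (Nat.choose (n + ℓ) ℓ : ℚ⟦X⟧) * (2 ^ ℓ * PowerSeries.X ^ (2 * ℓ)) *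
            (1 * ((Q⁻¹) ^ (n + 2 * ℓ + 1))) := by rw [hPn, hQ2, hQcancel, hy]
      _ = (Nat.choose (n + ℓ) ℓ : ℚ⟦X⟧) * 2 ^ ℓ * (PowerSeries.X ^ (2 * ℓ) *
            (Q⁻¹) ^ (n + 2 * ℓ + 1)) := by ring
  have heq : ((Q ^ 2) ^ (n + m + 1) - P ^ (n + 1) * ∑ ℓ ∈ range (m + 1),
        (Nat.choose (n + ℓ) ℓ : ℚ⟦X⟧) * (2 * PowerSeries.X ^ 2) ^ ℓ * (Q ^ 2) ^ (m - ℓ)) *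
        ((P⁻¹) ^ (n + 1) * (Q⁻¹) ^ (n + 2 * m + 1))
      = Q ^ (n + 1) * (P⁻¹) ^ (n + 1) - ∑ ℓ ∈ range (m + 1),
          (Nat.choose (n + ℓ) ℓ : ℚ⟦X⟧) * 2 ^ ℓ * (PowerSeries.X ^ (2 * ℓ) *
            (Q⁻¹) ^ (n + 2 * ℓ + 1)) := by
    rw [sub_mul]
    congr 1
    · rw [← pow_mul]
      have hre : Q ^ (2 * (n + m + 1)) * ((P⁻¹) ^ (n + 1) * (Q⁻¹) ^ (n + 2 * m + 1))
          = (Q ^ (2 * (n + m + 1)) * (Q⁻¹) ^ (n + 2 * m + 1)) * (P⁻¹) ^ (n + 1) := by ring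
      rw [hre, pow_mul_inv_pow hQ1 (by omega)]
      have : 2 * (n + m + 1) - (n + 2 * m + 1) = n + 1 := by omega
      rw [this, mul_comm]
    · rw [mul_assoc, Finset.sum_mul, Finset.mul_sum]
      refine Finset.sum_congr rfl fun ℓ hℓ => ?_
      rw [Finset.mem_range] at hℓ
      have := hterm ℓ (by omega)
      calc P ^ (n + 1) * ((Nat.choose (n + ℓ) ℓ : ℚ⟦X⟧) * (2 * PowerSeries.X ^ 2) ^ ℓ *
            (Q ^ 2) ^ (m - ℓ) * ((P⁻¹) ^ (n + 1) * (Q⁻¹) ^ (n + 2 * m + 1)))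
          = ((Nat.choose (n + ℓ) ℓ : ℚ⟦X⟧) * (2 * PowerSeries.X ^ 2) ^ ℓ * (Q ^ 2) ^ (m - ℓ)) *
              (P ^ (n + 1) * ((P⁻¹) ^ (n + 1) * (Q⁻¹) ^ (n + 2 * m + 1))) := by ring
        _ = _ := this
  rw [heq] at hdvd2
  -- extract the coefficient
  have hco : (PowerSeries.coeff n) (Q ^ (n + 1) * (P⁻¹) ^ (n + 1))
      = (PowerSeries.coeff n) (∑ ℓ ∈ range (m + 1),
          (Nat.choose (n + ℓ) ℓ : ℚ⟦X⟧) * 2 ^ ℓ * (PowerSeries.X ^ (2 * ℓ) *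
            (Q⁻¹) ^ (n + 2 * ℓ + 1))) := by
    rw [PowerSeries.X_pow_dvd_iff] at hdvd2
    have := hdvd2 n (by omega)
    rw [map_sub, sub_eq_zero] at this
    exact this
  rw [hco, map_sum]
  -- identify (Q⁻¹)^(d+1) with invOneSubPow
  have hinv : ∀ d : ℕ, ((Q⁻¹ : ℚ⟦X⟧)) ^ (d + 1) = (invOneSubPow ℚ (d + 1)).val := by
    intro d
    have h := invOneSubPow_inv_eq_one_sub_pow ℚ (d + 1)
    calc (Q⁻¹ : ℚ⟦X⟧) ^ (d + 1)
        = (Q⁻¹) ^ (d + 1) * ((invOneSubPow ℚ (d + 1)).inv * (invOneSubPow ℚ (d + 1)).val) := by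
          rw [(invOneSubPow ℚ (d + 1)).inv_val, mul_one]
      _ = ((Q⁻¹) ^ (d + 1) * Q ^ (d + 1)) * (invOneSubPow ℚ (d + 1)).val := by
          rw [h, hQdef, mul_assoc]
      _ = (invOneSubPow ℚ (d + 1)).val := by rw [← mul_pow, hQ1', one_pow, one_mul]
  refine Finset.sum_congr rfl fun ℓ hℓ => ?_
  rw [Finset.mem_range] at hℓ
  have h2ℓ : 2 * ℓ ≤ n := by omega
  -- compute the coefficient of each summand
  have hc1 : (Nat.choose (n + ℓ) ℓ : ℚ⟦X⟧) * 2 ^ ℓ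
      = PowerSeries.C ((Nat.choose (n + ℓ) ℓ : ℚ) * 2 ^ ℓ) := by
    rw [map_mul, map_natCast, map_pow, map_ofNat]
  rw [hc1, PowerSeries.coeff_C_mul, hinv (n + 2 * ℓ), invOneSubPow_val_succ_eq_mk_add_choose,
    PowerSeries.coeff_X_pow_mul', if_pos h2ℓ, PowerSeries.coeff_mk]
  have he1 : n + 2 * ℓ + (n - 2 * ℓ) = 2 * n := by omega
  rw [he1]
  have he2 : (Nat.choose (2 * n) (n + 2 * ℓ) : ℚ) = (Nat.choose (2 * n) (n - 2 * ℓ) : ℚ) := by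
    congr 1
    have := Nat.choose_symm (show n + 2 * ℓ ≤ 2 * n by omega)
    rw [show 2 * n - (n + 2 * ℓ) = n - 2 * ℓ by omega] at this
    exact this.symm
  have he3 : 2 * (n + 1) - 2 = 2 * n := by omega
  rw [he2, he3]
  ring
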